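/- Let Ω ⊆ ℝⁿ, x ∈ Ω, and let h : ℝⁿ → ℝ be continuous. Define K_<(x) = {y : h(y) < 0}, K_≤(x) = {y : h(y) ≤ 0}, the cone of possible directions K_p(x) = {y : ∃ θ̄ > 0, ∀ θ ∈ [0,θ̄], x + θy ∈ Ω}, and the Bouligand cone K_ad(x) = {y : ∃ sequences θ_k ≥ 0, y_k with (θ_k, y_k) → (0+, y) and x + θ_k y_k ∈ Ω}. If h is the Hadamard directional derivative of u at x, where Ω = {z : u(z) ≤ 0} and u(x) = 0, then K_<(x) ⊆ K_p(x) ⊆ K_ad(x) ⊆ K_≤(x). -/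
import Mathlib


open Filter Topology Set

set_option maxHeartbeats 1000000 in
/-- the chain of conic approximations
`K_< ⊆ K_p ⊆ K_ad ⊆ K_≤` for `Ω = {z : u z ≤ 0}` at a point `x` with `u x = 0`, where `h` is
the (continuous) Hadamard directional derivative of `u` at `x`. -/
theorem cones_chain {n : ℕ} (u : EuclideanSpace ℝ (Fin n) → ℝ)
    (x : EuclideanSpace ℝ (Fin n)) (h : EuclideanSpace ℝ (Fin n) → ℝ)
    (hx : u x = 0) (hcont : Continuous h)
    (hH : ∀ y : EuclideanSpace ℝ (Fin n),
      Tendsto (fun p : ℝ × EuclideanSpace ℝ (Fin n) => (u (x + p.1 • p.2) - u x) / p.1)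
        (𝓝[(Set.Ioi (0:ℝ)) ×ˢ (Set.univ : Set (EuclideanSpace ℝ (Fin n)))] (0, y))
        (𝓝 (h y))) :
    {y | h y < 0} ⊆
        {y : EuclideanSpace ℝ (Fin n) |
          ∃ θb : ℝ, 0 < θb ∧ ∀ θ ∈ Set.Icc (0:ℝ) θb, u (x + θ • y) ≤ 0} ∧
      {y : EuclideanSpace ℝ (Fin n) |
          ∃ θb : ℝ, 0 < θb ∧ ∀ θ ∈ Set.Icc (0:ℝ) θb, u (x + θ • y) ≤ 0} ⊆
        {y : EuclideanSpace ℝ (Fin n) |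
          ∃ θk : ℕ → ℝ, ∃ yk : ℕ → EuclideanSpace ℝ (Fin n),
            (∀ k, 0 < θk k) ∧ Tendsto θk atTop (𝓝 0) ∧ Tendsto yk atTop (𝓝 y) ∧
            ∀ k, u (x + θk k • yk k) ≤ 0} ∧
      {y : EuclideanSpace ℝ (Fin n) |
          ∃ θk : ℕ → ℝ, ∃ yk : ℕ → EuclideanSpace ℝ (Fin n),
            (∀ k, 0 < θk k) ∧ Tendsto θk atTop (𝓝 0) ∧ Tendsto yk atTop (𝓝 y) ∧
            ∀ k, u (x + θk k • yk k) ≤ 0} ⊆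
        {y | h y ≤ 0} := by
  refine ⟨?_, ?_, ?_⟩
  · intro y hy
    have hmap : Tendsto (fun θ : ℝ => ((θ, y) : ℝ × EuclideanSpace ℝ (Fin n)))
        (𝓝[>] (0:ℝ)) (𝓝[(Set.Ioi (0:ℝ)) ×ˢ (Set.univ : Set (EuclideanSpace ℝ (Fin n)))] (0, y)) := by
      rw [tendsto_nhdsWithin_iff]
      constructor
      · exact ((continuous_id.prodMk continuous_const).tendsto 0).mono_left nhdsWithin_le_nhds
      · filter_upwards [self_mem_nhdsWithin] with θ hθ
        exact ⟨hθ, mem_univ _⟩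
    have hq := (hH y).comp hmap
    have hev := hq.eventually (Iio_mem_nhds hy)
    simp only [Function.comp_def, hx, sub_zero] at hev
    rw [eventually_nhdsWithin_iff] at hev
    rcases Metric.eventually_nhds_iff.mp hev with ⟨ε, hε, hball⟩
    refine ⟨ε / 2, by linarith, ?_⟩
    intro θ hθ
    rcases eq_or_lt_of_le hθ.1 with h0 | h0
    · simp [← h0, hx]
    · have hθε : dist θ (0:ℝ) < ε := by
        rw [Real.dist_eq, sub_zero, abs_of_pos h0]; linarith [hθ.2]
      have hlt := hball hθε h0
      by_contra hc
      push_neg at hc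
      exact absurd (div_nonneg hc.le h0.le) (not_le.mpr hlt)
  · intro y hy
    rcases hy with ⟨θb, hθb, hle⟩
    refine ⟨fun k => θb / (k + 1), fun _ => y, fun k => by positivity, ?_, tendsto_const_nhds, ?_⟩
    · exact tendsto_const_nhds.div_atTop (tendsto_atTop_add_const_right _ 1 tendsto_natCast_atTop_atTop)
    · intro k
      refine hle _ ⟨by positivity, ?_⟩
      rw [div_le_iff₀ (by positivity)]
      nlinarith [Nat.cast_nonneg (α := ℝ) k]
  · intro y hy
    rcases hy with ⟨θk, yk, hpos, hθ0, hyk, hu⟩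
    have hmap : Tendsto (fun k => ((θk k, yk k) : ℝ × EuclideanSpace ℝ (Fin n))) atTop
        (𝓝[(Set.Ioi (0:ℝ)) ×ˢ (Set.univ : Set (EuclideanSpace ℝ (Fin n)))] (0, y)) := by
      rw [tendsto_nhdsWithin_iff]
      exact ⟨hθ0.prodMk_nhds hyk, Eventually.of_forall fun k => ⟨hpos k, mem_univ _⟩⟩
    have hq := (hH y).comp hmap
    refine le_of_tendsto' hq fun k => ?_
    show (u (x + θk k • yk k) - u x) / θk k ≤ 0
    exact div_nonpos_of_nonpos_of_nonneg (by linarith [hu k, hx.ge]) (hpos k).le
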